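/- For unit vectors a, s₁, s₂, b in ℝ³, the scalar (real) part of the quaternion product [cos η₁ + I₃r₁ sin η₁][cos η₂ + I₃r₂ sin η₂], where η₁ is the angle between a and s₁, η₂ the angle between s₂ and b, r₁ = (a×s₁)/‖a×s₁‖, r₂ = (s₂×b)/‖s₂×b‖, equals (a·s₁)(s₂·b) − (a·s₂)(s₁·b) + (a·b)(s₁·s₂). -/

import Mathlib

open Matrix

infixl:74 " ×₃ " => crossProduct

noncomputable def pureQuat (v : Fin 3 → ℝ) : Quaternion ℝ := ⟨0, v 0, v 1, v 2⟩

/-- The bivector `I₃ v`, identified with a quaternion. -/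
noncomputable def biv (v : Fin 3 → ℝ) : Quaternion ℝ := - pureQuat v

/-- The quaternion `q(η, r) = cos η + (I₃ r) sin η`. -/
noncomputable def quat (η : ℝ) (r : Fin 3 → ℝ) : Quaternion ℝ :=
  ((Real.cos η : ℝ) : Quaternion ℝ) + Real.sin η • biv r

lemma lagrange (u v : Fin 3 → ℝ) :
    (u ×₃ v) ⬝ᵥ (u ×₃ v) = (u ⬝ᵥ u) * (v ⬝ᵥ v) - (u ⬝ᵥ v) ^ 2 := by
  simp [crossProduct, dotProduct, Fin.sum_univ_three]
  ring

lemma binet (u v w x : Fin 3 → ℝ) :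
    (u ×₃ v) ⬝ᵥ (w ×₃ x) = (u ⬝ᵥ w) * (v ⬝ᵥ x) - (u ⬝ᵥ x) * (v ⬝ᵥ w) := by
  simp [crossProduct, dotProduct, Fin.sum_univ_three]
  ring

/-- the scalar part of
`q(η₁, r₁) q(η₂, r₂)` equals `(a·s₁)(s₂·b) − (a·s₂)(s₁·b) + (a·b)(s₁·s₂)`. -/
theorem stmt2 (a s₁ s₂ b : Fin 3 → ℝ)
    (ha : a ⬝ᵥ a = 1) (hs₁ : s₁ ⬝ᵥ s₁ = 1) (hs₂ : s₂ ⬝ᵥ s₂ = 1) (hb : b ⬝ᵥ b = 1)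
    (h₁ : a ×₃ s₁ ≠ 0) (h₂ : s₂ ×₃ b ≠ 0) :
    (quat (Real.arccos (a ⬝ᵥ s₁))
        ((Real.sqrt ((a ×₃ s₁) ⬝ᵥ (a ×₃ s₁)))⁻¹ • (a ×₃ s₁)) *
      quat (Real.arccos (s₂ ⬝ᵥ b))
        ((Real.sqrt ((s₂ ×₃ b) ⬝ᵥ (s₂ ×₃ b)))⁻¹ • (s₂ ×₃ b))).re =
      (a ⬝ᵥ s₁) * (s₂ ⬝ᵥ b) - (a ⬝ᵥ s₂) * (s₁ ⬝ᵥ b) + (a ⬝ᵥ b) * (s₁ ⬝ᵥ s₂) := by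
  set u := a ×₃ s₁ with hu
  set w := s₂ ×₃ b with hw
  have hu1 : u ⬝ᵥ u = 1 - (a ⬝ᵥ s₁) ^ 2 := by rw [hu, lagrange, ha, hs₁]; ring
  have hw1 : w ⬝ᵥ w = 1 - (s₂ ⬝ᵥ b) ^ 2 := by rw [hw, lagrange, hs₂, hb]; ring
  have hnn : ∀ v : Fin 3 → ℝ, 0 ≤ v ⬝ᵥ v := fun v => by
    simp only [dotProduct, Fin.sum_univ_three]
    nlinarith [mul_self_nonneg (v 0), mul_self_nonneg (v 1), mul_self_nonneg (v 2)]
  have hupos : 0 < u ⬝ᵥ u :=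
    lt_of_le_of_ne (hnn u)
      (fun h => h₁ (dotProduct_self_eq_zero.mp h.symm))
  have hwpos : 0 < w ⬝ᵥ w :=
    lt_of_le_of_ne (hnn w)
      (fun h => h₂ (dotProduct_self_eq_zero.mp h.symm))
  have hc₁ : Real.cos (Real.arccos (a ⬝ᵥ s₁)) = a ⬝ᵥ s₁ := by
    apply Real.cos_arccos <;> nlinarith [hupos]
  have hc₂ : Real.cos (Real.arccos (s₂ ⬝ᵥ b)) = s₂ ⬝ᵥ b := by
    apply Real.cos_arccos <;> nlinarith [hwpos]
  have hs₁' : Real.sin (Real.arccos (a ⬝ᵥ s₁)) = Real.sqrt (u ⬝ᵥ u) := by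
    rw [Real.sin_arccos, hu1]
  have hs₂' : Real.sin (Real.arccos (s₂ ⬝ᵥ b)) = Real.sqrt (w ⬝ᵥ w) := by
    rw [Real.sin_arccos, hw1]
  have hn₁ : Real.sqrt (u ⬝ᵥ u) * (Real.sqrt (u ⬝ᵥ u))⁻¹ = 1 :=
    mul_inv_cancel₀ (ne_of_gt (Real.sqrt_pos.mpr hupos))
  have hn₂ : Real.sqrt (w ⬝ᵥ w) * (Real.sqrt (w ⬝ᵥ w))⁻¹ = 1 :=
    mul_inv_cancel₀ (ne_of_gt (Real.sqrt_pos.mpr hwpos))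
  have huw : u ⬝ᵥ w = (a ⬝ᵥ s₂) * (s₁ ⬝ᵥ b) - (a ⬝ᵥ b) * (s₁ ⬝ᵥ s₂) := by
    rw [hu, hw, binet]
  simp only [quat, biv, Quaternion.re_mul, Quaternion.re_add,
    Quaternion.re_coe, Quaternion.re_smul, Quaternion.re_neg, Quaternion.imI_add,
    Quaternion.imI_coe, Quaternion.imI_smul, Quaternion.imI_neg, Quaternion.imJ_add,
    Quaternion.imJ_coe, Quaternion.imJ_smul, Quaternion.imJ_neg, Quaternion.imK_add,
    Quaternion.imK_coe, Quaternion.imK_smul, Quaternion.imK_neg, Pi.smul_apply,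
    smul_eq_mul, hc₁, hc₂, hs₁', hs₂']
  simp only [pureQuat, Pi.smul_apply, smul_eq_mul]
  have huw' : u 0 * w 0 + u 1 * w 1 + u 2 * w 2 =
      (a ⬝ᵥ s₂) * (s₁ ⬝ᵥ b) - (a ⬝ᵥ b) * (s₁ ⬝ᵥ s₂) := by
    rw [← huw]; simp [dotProduct, Fin.sum_univ_three]
  linear_combination (-(Real.sqrt (w ⬝ᵥ w) * (Real.sqrt (w ⬝ᵥ w))⁻¹ *
      (u 0 * w 0 + u 1 * w 1 + u 2 * w 2))) * hn₁ -
    (u 0 * w 0 + u 1 * w 1 + u 2 * w 2) * hn₂ - huw'
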